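/- Let F be a non-principal filter on ℕ and let g : ℕ → ℕ eventually dominate the increasing enumeration function of every member of F. Then F is meager as a subset of Cantor space. -/

import Mathlib

open Filter Set

/-- A strategy: maps finite sequences of the opponent's moves to a natural number. -/
abbrev Strat := List ℕ → ℕ

/-- TWO's move in inning `k` (0-indexed) when following strategy `σ` against ONE's
moves `m`: TWO has seen `m 0, …, m k`. -/
def twoFollow (σ : Strat) (m : ℕ → ℕ) (k : ℕ) : ℕ :=
  σ (List.ofFn fun i : Fin (k + 1) => m i)

/-- ONE's move in inning `k` when following strategy `σ` against TWO's moves `n`: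
ONE's move depends on `n 0, …, n (k-1)` (the first move is `σ []`). -/
def oneFollow (σ : Strat) (n : ℕ → ℕ) (k : ℕ) : ℕ :=
  σ (List.ofFn fun i : Fin k => n i)

/-- TWO wins the play `(m 0, n 0, m 1, n 1, …)` of the game `G1(F)`. -/
def TwoWins1 (F : Set (Set ℕ)) (m n : ℕ → ℕ) : Prop :=
  StrictMono n ∧ (∀ N : ℕ, ∃ k, N ≤ k ∧ m k < n k) ∧ Set.range n ∈ F

/-- TWO wins the play `(m 0, n 0, m 1, n 1, …)` of the game `G2(F)`. -/
def TwoWins2 (F : Set (Set ℕ)) (m n : ℕ → ℕ) : Prop :=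
  (∀ᶠ k in Filter.atTop, m k < n k) ∧ Set.range n ∈ F

/-- `σ` is a winning strategy for TWO in `G1(F)`. -/
def TwoWinning1 (F : Set (Set ℕ)) (σ : Strat) : Prop :=
  ∀ m : ℕ → ℕ, TwoWins1 F m (twoFollow σ m)

/-- `σ` is a winning strategy for ONE in `G1(F)`. -/
def OneWinning1 (F : Set (Set ℕ)) (σ : Strat) : Prop :=
  ∀ n : ℕ → ℕ, ¬ TwoWins1 F (oneFollow σ n) n

/-- `σ` is a winning strategy for TWO in `G2(F)`. -/
def TwoWinning2 (F : Set (Set ℕ)) (σ : Strat) : Prop :=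
  ∀ m : ℕ → ℕ, TwoWins2 F m (twoFollow σ m)

/-- `σ` is a winning strategy for ONE in `G2(F)`. -/
def OneWinning2 (F : Set (Set ℕ)) (σ : Strat) : Prop :=
  ∀ n : ℕ → ℕ, ¬ TwoWins2 F (oneFollow σ n) n

/-- `F` is a non-principal filter on `ℕ`: upward closed, closed under finite
intersections, and every member is infinite. -/
def IsNPFilter (F : Set (Set ℕ)) : Prop :=
  (∀ X ∈ F, ∀ Y : Set ℕ, X ⊆ Y → Y ∈ F) ∧
  (∀ X ∈ F, ∀ Y ∈ F, X ∩ Y ∈ F) ∧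
  (∀ X ∈ F, X.Infinite)

/-- `F` is a rare filter: every partition of `ℕ` into disjoint (nonempty) finite sets
admits a selector in `F`. -/
def IsRare (F : Set (Set ℕ)) : Prop :=
  ∀ I : ℕ → Set ℕ, (∀ n, (I n).Finite) → (∀ n, (I n).Nonempty) →
    (Pairwise fun i j => Disjoint (I i) (I j)) → (⋃ n, I n) = Set.univ →
    ∃ X ∈ F, ∀ n, (X ∩ I n).Subsingleton

/-- The subset of Cantor space `2^ℕ` corresponding to the filter `F`. -/
def cantorCoded (F : Set (Set ℕ)) : Set (ℕ → Bool) :=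
  {χ | {n | χ n = true} ∈ F}

/-- The increasing enumeration of `X ⊆ ℕ`. -/
noncomputable def enum (X : Set ℕ) : ℕ → ℕ := Nat.nth (· ∈ X)

/-- `g` eventually dominates `f`. -/
def EvDom (g f : ℕ → ℕ) : Prop := ∀ᶠ k in Filter.atTop, f k < g k


section Aux

/-- The interval endpoints used in the Talagrand-style partition. -/
private def aseq (g : ℕ → ℕ) : ℕ → ℕ
  | 0 => 0
  | j + 1 => (Finset.range (aseq g j + 1)).sup g + aseq g j + 1

private lemma aseq_strictMono (g : ℕ → ℕ) : StrictMono (aseq g) :=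
  strictMono_nat_of_lt_succ fun j => by
    show aseq g j < _ + aseq g j + 1; omega

private lemma g_lt_aseq_succ (g : ℕ → ℕ) {k j : ℕ} (hk : k ≤ aseq g j) :
    g k < aseq g (j + 1) := by
  have : g k ≤ (Finset.range (aseq g j + 1)).sup g :=
    Finset.le_sup (Finset.mem_range.2 (by omega))
  show g k < _ + aseq g j + 1; omega

/-- The "bad" closed nowhere dense sets. -/
private def SN (g : ℕ → ℕ) (N : ℕ) : Set (ℕ → Bool) :=
  {χ | ∀ j, N ≤ j → ∃ i, aseq g j ≤ i ∧ i < aseq g (j + 1) ∧ χ i = true}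

private lemma SN_nowhereDense (g : ℕ → ℕ) (N : ℕ) : IsNowhereDense (SN g N) := by
  have hclosed : IsClosed (SN g N) := by
    have : SN g N = ⋂ j, ⋂ (_ : N ≤ j),
        ⋃ i ∈ Finset.Ico (aseq g j) (aseq g (j + 1)), {χ : ℕ → Bool | χ i = true} := by
      ext χ; simp [SN, Finset.mem_Ico, and_assoc]
    rw [this]
    refine isClosed_iInter fun j => isClosed_iInter fun _ => ?_
    refine Set.Finite.isClosed_biUnion (Finset.finite_toSet _) fun i _ => ?_
    have : {χ : ℕ → Bool | χ i = true} = (fun χ : ℕ → Bool => χ i) ⁻¹' {true} := rfl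
    rw [this]
    exact IsClosed.preimage (continuous_apply i) (isClosed_singleton)
  rw [hclosed.isNowhereDense_iff]
  by_contra h
  obtain ⟨χ, hχ⟩ := Set.nonempty_iff_ne_empty.2 h
  obtain ⟨I, u, hu, hpi⟩ := isOpen_pi_iff.1 isOpen_interior χ hχ
  set j := max N (I.sup id + 1) with hj
  have hja : ∀ i ∈ I, i < aseq g j := by
    intro i hi
    have h1 : i ≤ I.sup id := Finset.le_sup (f := id) hi
    have h2 : j ≤ aseq g j := (aseq_strictMono g).le_apply
    omega
  set χ' : ℕ → Bool := fun i => if i < aseq g j then χ i else false with hχ'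
  have hmem : χ' ∈ SN g N := by
    refine interior_subset (hpi ?_)
    intro i hi
    show (if i < aseq g j then χ i else false) ∈ u i
    rw [if_pos (hja i hi)]
    exact (hu i hi).2
  obtain ⟨i, hi1, _, hi3⟩ := hmem j (le_max_left _ _)
  simp [hχ', Nat.not_lt.2 hi1] at hi3

end Aux

theorem stmt11' (F : Set (Set ℕ)) (hF : IsNPFilter F) (g : ℕ → ℕ)
    (hg : ∀ X ∈ F, EvDom g (enum X)) : IsMeagre (cantorCoded F) := by
  -- every X ∈ F meets all but finitely many intervals [aseq g j, aseq g (j+1))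
  have key : cantorCoded F ⊆ ⋃ N, SN g N := by
    intro χ hχ
    set X := {n | χ n = true} with hX
    have hXF : X ∈ F := hχ
    have hInf : X.Infinite := hF.2.2 X hXF
    have hInf' : {n | n ∈ X}.Infinite := hInf
    obtain ⟨K, hK⟩ := eventually_atTop.1 (hg X hXF)
    have hsm : StrictMono (Nat.nth (· ∈ X)) := Nat.nth_strictMono hInf'
    refine Set.mem_iUnion.2 ⟨enum X K + 1, fun j hj => ?_⟩
    -- a j > enum X K
    have haj : enum X K < aseq g j :=
      lt_of_lt_of_le (Nat.lt_of_lt_of_le (Nat.lt_succ_self _)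
        ((aseq_strictMono g).le_apply)) ((aseq_strictMono g).monotone hj)
    -- least k with nth k ≥ aseq g j
    have hne : ∃ k, aseq g j ≤ Nat.nth (· ∈ X) k :=
      ⟨aseq g j, hsm.le_apply⟩
    set k := Nat.find hne with hk
    have hk1 : aseq g j ≤ Nat.nth (· ∈ X) k := Nat.find_spec hne
    have hkK : K < k := by
      by_contra h
      exact absurd (le_trans hk1 (hsm.monotone (Nat.not_lt.1 h))) (Nat.not_le.2 haj)
    have hkaj : k ≤ aseq g j := by
      rcases Nat.eq_zero_or_pos k with h0 | h0
      · omega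
      · have h1 : ¬ aseq g j ≤ Nat.nth (· ∈ X) (k - 1) :=
          Nat.find_min hne (by omega)
        have h2 : (k - 1) ≤ Nat.nth (· ∈ X) (k - 1) := hsm.le_apply
        omega
    have hlt : Nat.nth (· ∈ X) k < g k := hK k (le_of_lt hkK)
    refine ⟨Nat.nth (· ∈ X) k, hk1, lt_trans hlt (g_lt_aseq_succ g hkaj), ?_⟩
    exact Nat.nth_mem_of_infinite hInf' k
  refine IsMeagre.mono key ?_
  exact isMeagre_iUnion fun N =>
    isMeagre_iff_countable_union_isNowhereDense.2
      ⟨{SN g N}, by simpa using SN_nowhereDense g N, countable_singleton _,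
        by simp⟩

/-- If `g` eventually dominates the enumeration function of every member of `F`,
then `F` is meager. -/
theorem stmt11 (F : Set (Set ℕ)) (hF : IsNPFilter F) (g : ℕ → ℕ)
    (hg : ∀ X ∈ F, EvDom g (enum X)) : IsMeagre (cantorCoded F) := by
  exact stmt11' F hF g hg
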